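/- The zero-extended Altes chirplet U is continuous on ℝ; in particular lim_{ω→0⁺} U(ω) = 0 = U(0), so the continuation U(ω) = 0 for ω ≤ 0 is continuous at the origin. -/

import Mathlib

open Filter Topology

/-- The reparameterized Altes chirplet frequency response. -/
noncomputable def altes (κ ω₀ lam : ℝ) : ℝ → ℂ := fun ω =>
  if 0 < ω then
    Complex.exp (-(↑(κ * (Real.log (ω / ω₀)) ^ 2) : ℂ)) *
      Complex.exp (2 * Real.pi * Complex.I * Real.log ω / Real.log lam)
  else 0

lemma altes_norm (κ ω₀ lam ω : ℝ) (hω : 0 < ω) :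
    ‖altes κ ω₀ lam ω‖ = Real.exp (-(κ * (Real.log (ω / ω₀)) ^ 2)) := by
  rw [altes, if_pos hω, norm_mul]
  have h1 : (2 * Real.pi * Complex.I * Real.log ω / Real.log lam : ℂ)
      = ((2 * Real.pi * Real.log ω / Real.log lam : ℝ) : ℂ) * Complex.I := by
    push_cast; ring
  rw [h1, Complex.norm_exp_ofReal_mul_I, mul_one]
  rw [Complex.norm_exp]
  norm_num
  norm_cast
  tauto

lemma altes_tendsto (κ ω₀ lam : ℝ) (hκ : 0 < κ) (hω₀ : 0 < ω₀) :
    Tendsto (altes κ ω₀ lam) (𝓝[>] (0 : ℝ)) (𝓝 0) := by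
  rw [tendsto_zero_iff_norm_tendsto_zero]
  have hg : Tendsto (fun ω => Real.exp (-(κ * (Real.log (ω / ω₀)) ^ 2)))
      (𝓝[>] (0 : ℝ)) (𝓝 0) := by
    have hlog : Tendsto (fun ω : ℝ => Real.log (ω / ω₀)) (𝓝[>] 0) atBot := by
      have h1 : Tendsto (fun ω : ℝ => Real.log ω - Real.log ω₀) (𝓝[>] 0) atBot :=
        Real.tendsto_log_nhdsGT_zero.atBot_add tendsto_const_nhds
      refine h1.congr' ?_
      filter_upwards [self_mem_nhdsWithin] with x hx
      rw [Real.log_div (ne_of_gt hx) (ne_of_gt hω₀)]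
    have hsq : Tendsto (fun x : ℝ => x ^ 2) atBot atTop := by
      have := (tendsto_pow_atTop (n := 2) (by norm_num)).comp (tendsto_abs_atBot_atTop (G := ℝ))
      refine this.congr fun x => ?_
      simp only [Function.comp_apply, sq_abs]
    have h2 : Tendsto (fun ω : ℝ => κ * Real.log (ω / ω₀) ^ 2) (𝓝[>] 0) atTop :=
      (Tendsto.const_mul_atTop hκ (hsq.comp hlog))
    exact Real.tendsto_exp_atBot.comp (tendsto_neg_atTop_atBot.comp h2)
  refine hg.congr' ?_
  filter_upwards [self_mem_nhdsWithin] with x hx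
  exact (altes_norm κ ω₀ lam x hx).symm

lemma altes_eventually_pos (κ ω₀ lam x : ℝ) (hx : 0 < x) :
    altes κ ω₀ lam =ᶠ[𝓝 x] fun ω =>
      Complex.exp (-(↑(κ * (Real.log (ω / ω₀)) ^ 2) : ℂ)) *
        Complex.exp (2 * Real.pi * Complex.I * Real.log ω / Real.log lam) := by
  filter_upwards [lt_mem_nhds hx] with y hy
  rw [altes, if_pos hy]

/-- The zero-extended Altes chirplet is continuous on ℝ; in
particular lim_{ω→0⁺} U(ω) = 0 = U(0), so the zero continuation is continuous
at the origin. -/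
theorem altes_continuous (κ ω₀ lam : ℝ) (hκ : 0 < κ) (hω₀ : 0 < ω₀)
    (hlam : 0 < lam) (hlam1 : lam ≠ 1) :
    Continuous (altes κ ω₀ lam) ∧
      Tendsto (altes κ ω₀ lam) (𝓝[>] (0 : ℝ)) (𝓝 0) ∧
      altes κ ω₀ lam 0 = 0 := by
  have h0 : altes κ ω₀ lam 0 = 0 := by rw [altes]; simp
  have hright := altes_tendsto κ ω₀ lam hκ hω₀
  refine ⟨?_, hright, h0⟩
  rw [continuous_iff_continuousAt]
  intro x
  rcases lt_trichotomy x 0 with hx | rfl | hx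
  · -- eventually 0
    have : altes κ ω₀ lam =ᶠ[𝓝 x] fun _ => (0 : ℂ) := by
      filter_upwards [gt_mem_nhds hx] with y hy
      rw [altes, if_neg (not_lt.mpr (le_of_lt hy))]
    exact ContinuousAt.congr (continuousAt_const) this.symm
  · -- at 0
    rw [ContinuousAt, h0, ← nhdsLE_sup_nhdsGT, tendsto_sup]
    constructor
    · refine tendsto_const_nhds.congr' ?_
      filter_upwards [self_mem_nhdsWithin] with y (hy : y ≤ 0)
      rw [altes, if_neg (not_lt.mpr hy)]
    · exact hright
  · -- at positive point
    refine ContinuousAt.congr ?_ (altes_eventually_pos κ ω₀ lam x hx).symm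
    have hlog : ContinuousAt Real.log x := Real.continuousAt_log (ne_of_gt hx)
    have h1 : ContinuousAt (fun ω : ℝ => Real.log (ω / ω₀)) x :=
      (Real.continuousAt_log (by positivity)).comp (continuousAt_id.div_const ω₀)
    exact ((Complex.continuous_exp.continuousAt.comp
        ((Complex.continuous_ofReal.continuousAt.comp
          ((continuousAt_const.mul (h1.pow 2))) ).neg)).mul
      (Complex.continuous_exp.continuousAt.comp
        (((continuousAt_const.mul (Complex.continuous_ofReal.continuousAt.comp hlog)).div_const _))))
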